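/- arXiv:2111.06607 — 3 statements merged into one kernel-verified Lean document; each statement's English description precedes it below -/
import Mathlib

section
/- Let L be a real Lie algebra and Φ : L → so(3,ℝ) a homomorphism of Lie algebras. If h ⊆ L is a Lie subalgebra with dim h = 2, then there exists a nonzero element X ∈ h with Φ(X) = 0. -/
open Matrix

attribute [local instance 100] LieRing.ofAssociativeRing

/-- `so(3,ℝ)`: the Lie algebra of real 3×3 skew-symmetric matrices,
realised as a Lie subalgebra of the matrix Lie algebra. -/
noncomputable def so3 : LieSubalgebra ℝ (Matrix (Fin 3) (Fin 3) ℝ) :=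
  skewAdjointMatricesLieSubalgebra (1 : Matrix (Fin 3) (Fin 3) ℝ)

/-- Skew matrix from a vector. -/
def Sk (v : Fin 3 → ℝ) : Matrix (Fin 3) (Fin 3) ℝ :=
  !![0, -v 2, v 1; v 2, 0, -v 0; -v 1, v 0, 0]

lemma Sk_inj {u v : Fin 3 → ℝ} (huv : Sk u = Sk v) : u = v := by
  funext i
  fin_cases i
  · exact congrFun (congrFun huv 2) 1
  · exact congrFun (congrFun huv 0) 2
  · exact congrFun (congrFun huv 1) 0

lemma Sk_smul_add (a b : ℝ) (u v : Fin 3 → ℝ) :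
    Sk (a • u + b • v) = a • Sk u + b • Sk v := by
  ext i j
  fin_cases i <;> fin_cases j <;> simp [Sk] <;> ring

lemma mem_so3 {A : Matrix (Fin 3) (Fin 3) ℝ} (hA : A ∈ so3) : A = Sk ![A 2 1, A 0 2, A 1 0] := by
  rw [so3, mem_skewAdjointMatricesLieSubalgebra, mem_skewAdjointMatricesSubmodule] at hA
  change Aᵀ * 1 = 1 * (-A) at hA
  rw [Matrix.mul_one, Matrix.one_mul] at hA
  ext i j
  fin_cases i <;> fin_cases j <;>
    simp [Sk] <;>
    first
      | (have := congrFun (congrFun hA ⟨0,by norm_num⟩) ⟨0,by norm_num⟩; simp [Matrix.transpose_apply] at this; linarith)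
      | (have := congrFun (congrFun hA ⟨1,by norm_num⟩) ⟨1,by norm_num⟩; simp [Matrix.transpose_apply] at this; linarith)
      | (have := congrFun (congrFun hA ⟨2,by norm_num⟩) ⟨2,by norm_num⟩; simp [Matrix.transpose_apply] at this; linarith)
      | rfl
      | (have := congrFun (congrFun hA ⟨0,by norm_num⟩) ⟨1,by norm_num⟩; simp [Matrix.transpose_apply] at this; linarith)
      | (have := congrFun (congrFun hA ⟨0,by norm_num⟩) ⟨2,by norm_num⟩; simp [Matrix.transpose_apply] at this; linarith)
      | (have := congrFun (congrFun hA ⟨1,by norm_num⟩) ⟨2,by norm_num⟩; simp [Matrix.transpose_apply] at this; linarith)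

lemma Sk_bracket (u v : Fin 3 → ℝ) : Sk u * Sk v - Sk v * Sk u = Sk (u ⨯₃ v) := by
  ext i j
  fin_cases i <;> fin_cases j <;>
    simp [Sk, Matrix.mul_apply, Fin.sum_univ_three, cross_apply] <;> ring

/-- If `Φ : L → so(3,ℝ)` is a Lie algebra homomorphism and `h ⊆ L` is a
2-dimensional Lie subalgebra, then `Φ` kills some nonzero element of `h`. -/
theorem exists_nonzero_in_ker_of_dim_two_subalgebra
    (L : Type*) [LieRing L] [LieAlgebra ℝ L]
    (Φ : L →ₗ⁅ℝ⁆ so3)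
    (h : LieSubalgebra ℝ L) (hdim : Module.finrank ℝ h = 2) :
    ∃ X ∈ h, X ≠ 0 ∧ Φ X = 0 := by
  by_contra hc
  push_neg at hc
  have hker : ∀ x : h, Φ x = 0 → x = 0 := by
    intro x hx
    by_contra hx0
    exact (hc x.val x.property (fun h0 => hx0 (Subtype.ext h0))) hx
  haveI : Module.Finite ℝ h := Module.finite_of_finrank_pos (by omega)
  let b := Module.finBasisOfFinrankEq ℝ h hdim
  set X : h := b 0 with hX
  set Y : h := b 1 with hY
  -- the Lie hom restricted to h
  let f : h →ₗ⁅ℝ⁆ so3 := Φ.comp h.incl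
  have hf : ∀ x : h, f x = Φ x.val := fun x => rfl
  set A : so3 := f X with hA
  set B : so3 := f Y with hB
  have hAmem := mem_so3 A.property
  have hBmem := mem_so3 B.property
  set u : Fin 3 → ℝ := ![A.val 2 1, A.val 0 2, A.val 1 0] with hu
  set v : Fin 3 → ℝ := ![B.val 2 1, B.val 0 2, B.val 1 0] with hv
  -- bracket of X Y lies in h and decomposes
  have hrep : ⁅X, Y⁆ = b.repr ⁅X, Y⁆ 0 • X + b.repr ⁅X, Y⁆ 1 • Y := by
    conv_lhs => rw [← b.sum_repr ⁅X, Y⁆]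
    rw [Fin.sum_univ_two]
  set c0 : ℝ := b.repr ⁅X, Y⁆ 0
  set c1 : ℝ := b.repr ⁅X, Y⁆ 1
  have hfb : ⁅A, B⁆ = c0 • A + c1 • B := by
    rw [hA, hB, ← LieHom.map_lie, hrep]
    simp
  -- pass to matrices
  have hmat : A.val * B.val - B.val * A.val = c0 • A.val + c1 • B.val := by
    have := congrArg (Subtype.val) hfb
    simpa [LieRing.of_associative_ring_bracket] using this
  have hcross : u ⨯₃ v = c0 • u + c1 • v := by
    apply Sk_inj
    rw [← Sk_bracket, Sk_smul_add, ← hAmem, ← hBmem]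
    exact hmat
  -- cross product is orthogonal to u and v hence zero
  have hzero : u ⨯₃ v = 0 := by
    have h1 : (u ⨯₃ v) ⬝ᵥ (u ⨯₃ v) = 0 := by
      nth_rewrite 1 [hcross]
      rw [add_dotProduct, smul_dotProduct, smul_dotProduct,
        dot_self_cross, dot_cross_self]
      simp
    exact dotProduct_self_eq_zero.mp h1
  -- but u, v are linearly independent
  have hXYind : LinearIndependent ℝ ![X, Y] := by
    have := b.linearIndependent
    rw [LinearIndependent.pair_iff]
    intro s t hst
    have h2 : (s • X + t • Y : h) = 0 := hst
    have := Fintype.linearIndependent_iff.mp b.linearIndependent ![s, t] (by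
      simpa [Fin.sum_univ_two] using h2)
    exact ⟨this 0, this 1⟩
  have huvind : LinearIndependent ℝ ![u, v] := by
    rw [LinearIndependent.pair_iff]
    intro s t hst
    have hS : Sk (s • u + t • v) = Sk 0 := by
      rw [hst]
    rw [Sk_smul_add, ← hAmem, ← hBmem] at hS
    have hS0 : Sk (0 : Fin 3 → ℝ) = 0 := by
      ext i j; fin_cases i <;> fin_cases j <;> simp [Sk, Matrix.vecHead, Matrix.vecTail]
    rw [hS0] at hS
    have hsAB : (s • A + t • B : so3) = 0 := Subtype.ext (by simpa using hS)
    have : s • X + t • Y = 0 := by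
      apply hker
      have : f (s • X + t • Y) = s • A + t • B := by
        simp [hA, hB]
      rw [← hf]
      rw [this, hsAB]
    exact LinearIndependent.pair_iff.mp hXYind s t this
  rw [← crossProduct_ne_zero_iff_linearIndependent] at huvind
  exact huvind hzero
end

section
/- Let V be a real vector space, φ ∈ ℝ, and θ₁, θ₂, θ₃, θ₄ ∈ V. Define θ₁' = cos φ·θ₄ + sin φ·θ₃, θ₂' = −cos φ·θ₂ + sin φ·θ₁, θ₃' = sin φ·θ₄ − cos φ·θ₃, θ₄' = −sin φ·θ₂ − cos φ·θ₁ in V. Then in the exterior algebra of V one has θ₁∧θ₃ + θ₂∧θ₄ = cos(2φ)·(θ₁'∧θ₂' − θ₃'∧θ₄') + sin(2φ)·(θ₁'∧θ₄' + θ₃'∧θ₂'). -/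
open Real

/-- The rotated coframe identity
`θ₁∧θ₃ + θ₂∧θ₄ = cos(2φ)(θ₁'∧θ₂' - θ₃'∧θ₄') + sin(2φ)(θ₁'∧θ₄' + θ₃'∧θ₂')` in the
exterior algebra of `V`. -/
theorem rotated_coframe_wedge_identity_J
    (V : Type*) [AddCommGroup V] [Module ℝ V]
    (φ : ℝ) (θ₁ θ₂ θ₃ θ₄ : V) :
    let ι := ExteriorAlgebra.ι ℝ (M := V)
    let θ₁' : V := cos φ • θ₄ + sin φ • θ₃
    let θ₂' : V := -cos φ • θ₂ + sin φ • θ₁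
    let θ₃' : V := sin φ • θ₄ - cos φ • θ₃
    let θ₄' : V := -sin φ • θ₂ - cos φ • θ₁
    ι θ₁ * ι θ₃ + ι θ₂ * ι θ₄ =
      cos (2 * φ) • (ι θ₁' * ι θ₂' - ι θ₃' * ι θ₄') +
        sin (2 * φ) • (ι θ₁' * ι θ₄' + ι θ₃' * ι θ₂') := by
  intro ι θ₁' θ₂' θ₃' θ₄'
  have hsq : ∀ x : V, ι x * ι x = 0 := fun x => ExteriorAlgebra.ι_sq_zero x
  have hsw : ∀ x y : V, ι y * ι x = -(ι x * ι y) := fun x y => by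
    exact eq_neg_of_add_eq_zero_left (ExteriorAlgebra.ι_add_mul_swap (R := ℝ) y x)
  simp only [θ₁', θ₂', θ₃', θ₄', map_add, map_smul, map_sub, map_neg, neg_smul,
    add_mul, mul_add, sub_mul, mul_sub, mul_neg, neg_mul, smul_mul_assoc, mul_smul_comm, smul_smul,
    hsq, smul_zero, hsw θ₁ θ₂, hsw θ₁ θ₃, hsw θ₁ θ₄, hsw θ₂ θ₃, hsw θ₂ θ₄, hsw θ₃ θ₄,
    cos_two_mul', sin_two_mul, smul_neg]
  match_scalars <;>
    first
    | ring1
    | linear_combination (- sin φ ^ 2 - cos φ ^ 2 - 1) * sin_sq_add_cos_sq φ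
end

section
/- Let V be a 4-dimensional real inner product space and I : V → V a linear isometry with I ∘ I = −id. Let e₃, e₄ ∈ V be orthonormal vectors with I e₃ = e₄, let D₁ = span{e₃, e₄} and let D₀ be the orthogonal complement of D₁ (which is I-invariant). Then for every 2-dimensional I-invariant subspace D of V with D ≠ D₀ and D ≠ D₁, there exist a unit vector e₁ ∈ D₀ and an angle φ ∈ ℝ such that D = span{−cos φ·e₃ + sin φ·e₁, −cos φ·e₄ + sin φ·(I e₁)}. -/
open RealInnerProductSpace

set_option maxHeartbeats 1600000

/-- Lemma C (pointwise linear-algebra content): in a 4-dimensional real inner product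
space with an orthogonal complex structure `I`, any 2-dimensional `I`-invariant
subspace `D` different from `D₁ = span{e₃, e₄}` and `D₀ = D₁ᗮ` is of the form
`span{-cos φ • e₃ + sin φ • e₁, -cos φ • e₄ + sin φ • (I e₁)}` for some unit vector
`e₁ ∈ D₀` and some angle `φ`. -/
theorem invariant_plane_normal_form
    (V : Type*) [NormedAddCommGroup V] [InnerProductSpace ℝ V]
    (hdim : Module.finrank ℝ V = 4)
    (I : V →ₗ[ℝ] V)
    (hiso : ∀ v : V, ‖I v‖ = ‖v‖)
    (hI2 : ∀ v : V, I (I v) = -v)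
    (e₃ e₄ : V) (he₃ : ‖e₃‖ = 1) (he₄ : ‖e₄‖ = 1) (horth : ⟪e₃, e₄⟫ = 0)
    (hIe₃ : I e₃ = e₄)
    (D : Submodule ℝ V)
    (hD2 : Module.finrank ℝ D = 2)
    (hDinv : ∀ v ∈ D, I v ∈ D)
    (hD0 : D ≠ (Submodule.span ℝ ({e₃, e₄} : Set V))ᗮ)
    (hD1 : D ≠ Submodule.span ℝ ({e₃, e₄} : Set V)) :
    ∃ (e₁ : V) (φ : ℝ), ‖e₁‖ = 1 ∧ e₁ ∈ (Submodule.span ℝ ({e₃, e₄} : Set V))ᗮ ∧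
      D = Submodule.span ℝ
        ({-(Real.cos φ) • e₃ + Real.sin φ • e₁,
          -(Real.cos φ) • e₄ + Real.sin φ • (I e₁)} : Set V) := by
  have hFD : FiniteDimensional ℝ V := Module.finite_of_finrank_pos (by rw [hdim]; norm_num)
  -- I preserves inner products
  have hinn : ∀ x y : V, ⟪I x, I y⟫ = ⟪x, y⟫ := fun x y =>
    LinearIsometry.inner_map_map ⟨I, hiso⟩ x y
  have hskew : ∀ x : V, ⟪x, I x⟫ = 0 := by
    intro x
    have h1 : ⟪I x, I (I x)⟫ = ⟪x, I x⟫ := hinn x (I x)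
    rw [hI2, inner_neg_right] at h1
    have h2 : ⟪I x, x⟫ = ⟪x, I x⟫ := real_inner_comm _ _
    linarith
  have hIe₄ : I e₄ = -e₃ := by rw [← hIe₃, hI2]
  -- span of two orthonormal vectors has finrank 2
  have spanrank : ∀ x y : V, ‖x‖ = 1 → ‖y‖ = 1 → ⟪x, y⟫ = 0 →
      Module.finrank ℝ (Submodule.span ℝ ({x, y} : Set V)) = 2 := by
    intro x y hx hy hxy
    have hyx : ⟪y, x⟫ = 0 := by rw [real_inner_comm]; exact hxy
    have ho : Orthonormal ℝ ![x, y] := by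
      rw [orthonormal_iff_ite]
      intro i j
      fin_cases i <;> fin_cases j <;>
        simp [hx, hy, hxy, hyx, real_inner_self_eq_norm_sq]
    have h := finrank_span_eq_card ho.linearIndependent
    have hr : Set.range ![x, y] = ({x, y} : Set V) := by
      ext z; simp [Fin.exists_fin_two, or_comm]
    rw [hr] at h
    simpa using h
  have hrank1 : Module.finrank ℝ (Submodule.span ℝ ({e₃, e₄} : Set V)) = 2 :=
    spanrank _ _ he₃ he₄ horth
  have hrank0 : Module.finrank ℝ ((Submodule.span ℝ ({e₃, e₄} : Set V))ᗮ) = 2 := by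
    have := Submodule.finrank_add_finrank_orthogonal (Submodule.span ℝ ({e₃, e₄} : Set V))
    omega
  -- membership in D₁ᗮ
  have hmem0 : ∀ x : V, (⟪e₃, x⟫ = 0 ∧ ⟪e₄, x⟫ = 0) →
      x ∈ (Submodule.span ℝ ({e₃, e₄} : Set V))ᗮ := by
    intro x ⟨h3, h4⟩
    rw [Submodule.mem_orthogonal]
    intro u hu
    induction hu using Submodule.span_induction with
    | mem u hu =>
        rcases hu with h | h
        · subst h; exact h3
        · simp only [Set.mem_singleton_iff] at h; subst h; exact h4
    | zero => simp
    | add a b _ _ ha hb => rw [inner_add_left, ha, hb]; ring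
    | smul c a _ ha => rw [real_inner_smul_left, ha]; ring
  -- key: for a unit vector x in D, D = span {x, I x}
  have key : ∀ x : V, x ∈ D → ‖x‖ = 1 → D = Submodule.span ℝ ({x, I x} : Set V) := by
    intro x hxD hx
    have hle : Submodule.span ℝ ({x, I x} : Set V) ≤ D := by
      rw [Submodule.span_le]
      rintro z (h | h)
      · subst h; exact hxD
      · simp only [Set.mem_singleton_iff] at h; subst h; exact hDinv x hxD
    refine (Submodule.eq_of_le_of_finrank_le hle ?_).symm
    rw [hD2, spanrank x (I x) hx (by rw [hiso, hx]) (hskew x)]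
  -- pick a unit element of D
  obtain ⟨v', hv'D, hv'⟩ : ∃ v' ∈ D, ‖v'‖ = 1 := by
    obtain ⟨v, hvD, hv0⟩ := (Submodule.ne_bot_iff D).mp (by
      intro h; rw [h] at hD2; simp at hD2)
    refine ⟨‖v‖⁻¹ • v, D.smul_mem _ hvD, ?_⟩
    rw [norm_smul, norm_inv, norm_norm, inv_mul_cancel₀ (norm_ne_zero_iff.mpr hv0)]
  obtain ⟨α, hα⟩ : ∃ a : ℝ, a = ⟪e₃, v'⟫ := ⟨_, rfl⟩
  obtain ⟨β, hβ⟩ : ∃ a : ℝ, a = ⟪e₄, v'⟫ := ⟨_, rfl⟩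
  have hi3 : ⟪e₃, I v'⟫ = -β := by
    have h : ⟪I e₄, I v'⟫ = ⟪e₄, v'⟫ := hinn e₄ v'
    rw [hIe₄, inner_neg_left, ← hβ] at h
    linarith [h]
  have hi4 : ⟪e₄, I v'⟫ = α := by
    have h : ⟪I e₃, I v'⟫ = ⟪e₃, v'⟫ := hinn e₃ v'
    rwa [hIe₃, ← hα] at h
  obtain ⟨r, hrdef⟩ : ∃ t : ℝ, t = Real.sqrt (α ^ 2 + β ^ 2) := ⟨_, rfl⟩
  have hr0 : 0 ≤ r := by rw [hrdef]; exact Real.sqrt_nonneg _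
  have hrsq : r ^ 2 = α ^ 2 + β ^ 2 := by rw [hrdef]; exact Real.sq_sqrt (by positivity)
  by_cases hr : r = 0
  · -- then v' ∈ D₁ᗮ and D = D₁ᗮ, contradiction
    exfalso
    have hαβ : α = 0 ∧ β = 0 := by
      have : α ^ 2 + β ^ 2 = 0 := by rw [← hrsq, hr]; ring
      constructor <;> nlinarith
    have hv'0 : v' ∈ (Submodule.span ℝ ({e₃, e₄} : Set V))ᗮ :=
      hmem0 v' ⟨by rw [← hα]; exact hαβ.1, by rw [← hβ]; exact hαβ.2⟩
    have hIv'0 : I v' ∈ (Submodule.span ℝ ({e₃, e₄} : Set V))ᗮ :=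
      hmem0 (I v') ⟨by rw [hi3, hαβ.2, neg_zero], by rw [hi4, hαβ.1]⟩
    have hDle : D ≤ (Submodule.span ℝ ({e₃, e₄} : Set V))ᗮ := by
      rw [key v' hv'D hv', Submodule.span_le]
      rintro z (h | h)
      · subst h; exact hv'0
      · simp only [Set.mem_singleton_iff] at h; subst h; exact hIv'0
    exact hD0 (Submodule.eq_of_le_of_finrank_le hDle (by rw [hD2, hrank0]))
  · have hrpos : 0 < r := lt_of_le_of_ne hr0 (Ne.symm hr)
    -- construct a unit w ∈ D with ⟪e₃,w⟫ = -r, ⟪e₄,w⟫ = 0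
    obtain ⟨w, hwD, hwnorm, hw3, hw4⟩ :
        ∃ w ∈ D, ‖w‖ = 1 ∧ ⟪e₃, w⟫ = -r ∧ ⟪e₄, w⟫ = 0 := by
      refine ⟨(-(α / r)) • v' + (β / r) • I v',
        D.add_mem (D.smul_mem _ hv'D) (D.smul_mem _ (hDinv v' hv'D)), ?_, ?_, ?_⟩
      · have hIv' : ‖I v'‖ = 1 := by rw [hiso, hv']
        have hcross : ⟪(-(α / r)) • v', (β / r) • I v'⟫ = 0 := by
          rw [real_inner_smul_left, real_inner_smul_right, hskew v']; ring
        have h := norm_add_sq_real ((-(α / r)) • v') ((β / r) • I v')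
        rw [hcross] at h
        have h1 : ‖(-(α / r)) • v'‖ ^ 2 = (α / r) ^ 2 := by
          rw [norm_smul, hv', Real.norm_eq_abs, mul_one, sq_abs]; ring
        have h2 : ‖(β / r) • I v'‖ ^ 2 = (β / r) ^ 2 := by
          rw [norm_smul, hIv', Real.norm_eq_abs, mul_one, sq_abs]
        rw [h1, h2] at h
        have hsq : ‖(-(α / r)) • v' + (β / r) • I v'‖ ^ 2 = 1 := by
          rw [h]
          field_simp
          nlinarith [hrsq]
        nlinarith [norm_nonneg ((-(α / r)) • v' + (β / r) • I v'), hsq]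
      · simp only [inner_add_right, real_inner_smul_right, hi3, ← hα]
        field_simp
        nlinarith [hrsq]
      · simp only [inner_add_right, real_inner_smul_right, hi4, ← hβ]
        field_simp
        ring
    set u : V := w + r • e₃ with hudef
    have hu0 : u ∈ (Submodule.span ℝ ({e₃, e₄} : Set V))ᗮ := by
      apply hmem0
      constructor
      · rw [hudef, inner_add_right, real_inner_smul_right, hw3,
          real_inner_self_eq_norm_sq, he₃]; ring
      · rw [hudef, inner_add_right, real_inner_smul_right, hw4, real_inner_comm e₃ e₄, horth]; ring
    have hunorm : ‖u‖ ^ 2 = 1 - r ^ 2 := by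
      have hwe3 : ⟪w, e₃⟫ = -r := by rw [real_inner_comm]; exact hw3
      have h : ⟪u, u⟫ = 1 - r ^ 2 := by
        rw [hudef]
        simp only [inner_add_left, inner_add_right, real_inner_smul_left,
          real_inner_smul_right, real_inner_self_eq_norm_sq, he₃, hwnorm, hw3, hwe3,
          norm_smul, Real.norm_eq_abs, mul_one, sq_abs]
        ring
      rw [← real_inner_self_eq_norm_sq, h]
    by_cases hu : ‖u‖ = 0
    · -- w ∈ D₁, so D = D₁, contradiction
      exfalso
      have huz : u = 0 := norm_eq_zero.mp hu
      have hwe : w = (-r) • e₃ := by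
        rw [hudef] at huz
        rw [eq_neg_of_add_eq_zero_left huz, neg_smul]
      have hwD₁ : w ∈ Submodule.span ℝ ({e₃, e₄} : Set V) := by
        rw [hwe]
        exact Submodule.smul_mem _ _ (Submodule.subset_span (by left; rfl))
      have hIwD₁ : I w ∈ Submodule.span ℝ ({e₃, e₄} : Set V) := by
        have : I w = (-r) • e₄ := by rw [hwe, map_smul, hIe₃]
        rw [this]
        exact Submodule.smul_mem _ _ (Submodule.subset_span (by right; rfl))
      have hDle : D ≤ Submodule.span ℝ ({e₃, e₄} : Set V) := by
        rw [key w hwD hwnorm, Submodule.span_le]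
        rintro z (h | h)
        · subst h; exact hwD₁
        · simp only [Set.mem_singleton_iff] at h; subst h; exact hIwD₁
      exact hD1 (Submodule.eq_of_le_of_finrank_le hDle (by rw [hD2, hrank1]))
    · have hupos : 0 < ‖u‖ := lt_of_le_of_ne (norm_nonneg u) (Ne.symm hu)
      have hr1 : r ≤ 1 := by nlinarith
      refine ⟨‖u‖⁻¹ • u, Real.arccos r, ?_, ?_, ?_⟩
      · rw [norm_smul, norm_inv, norm_norm, inv_mul_cancel₀ hu]
      · exact Submodule.smul_mem _ _ hu0
      · have hcos : Real.cos (Real.arccos r) = r := Real.cos_arccos (by linarith) hr1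
        have hsin : Real.sin (Real.arccos r) = ‖u‖ := by
          rw [Real.sin_arccos, ← hunorm, Real.sqrt_sq (norm_nonneg u)]
        have hv1 : -(Real.cos (Real.arccos r)) • e₃ +
            Real.sin (Real.arccos r) • (‖u‖⁻¹ • u) = w := by
          rw [hcos, hsin, smul_smul, mul_inv_cancel₀ hu, one_smul, hudef]
          module
        have hv2 : -(Real.cos (Real.arccos r)) • e₄ +
            Real.sin (Real.arccos r) • (I (‖u‖⁻¹ • u)) = I w := by
          rw [hcos, hsin, map_smul, smul_smul, mul_inv_cancel₀ hu, one_smul, hudef,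
            map_add, map_smul, hIe₃]
          module
        rw [hv1, hv2]
        exact key w hwD hwnorm
end
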